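/- Fix c > 0, δ ∈ ℝ with c + δ > 0, and t ∈ [0,1]. Define φ(r,q;t) := −log(r^{1−t}·q^t + (1−r)^{1−t}·(1−q)^t) with real powers. Then the sequence n ↦ n·φ(c/n, (c+δ)/n; t) converges, as n → ∞ (Filter.atTop), to c + t·δ − c^{1−t}·(c+δ)^t. -/

import Mathlib

open Filter Real

/-- Per-edge Chernoff objective
`φ(r,q;t) = −log(r^(1−t) q^t + (1−r)^(1−t) (1−q)^t)` (real powers). -/
noncomputable def chernoffPhi (r q t : ℝ) : ℝ :=
  -Real.log (r ^ (1 - t) * q ^ t + (1 - r) ^ (1 - t) * (1 - q) ^ t)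

/-- Per-edge Chernoff limit: `n · φ(c/n, (c+δ)/n; t) → c + tδ − c^(1−t) (c+δ)^t`. -/
theorem per_edge_chernoff_limit (c δ t : ℝ) (hc : 0 < c) (hcδ : 0 < c + δ)
    (ht : t ∈ Set.Icc (0 : ℝ) 1) :
    Tendsto (fun n : ℕ => (n : ℝ) * chernoffPhi (c / n) ((c + δ) / n) t) atTop
      (nhds (c + t * δ - c ^ (1 - t) * (c + δ) ^ t)) := by
  set a : ℝ := c ^ (1 - t) * (c + δ) ^ t with ha
  set F : ℝ → ℝ := fun x => -Real.log (a * x + (1 - c * x) ^ (1 - t) * (1 - (c + δ) * x) ^ t)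
    with hF
  -- F has derivative c + t*δ - a at 0
  have h1 : HasDerivAt (fun x : ℝ => 1 - c * x) (-c) 0 := by
    simpa using ((hasDerivAt_id (0:ℝ)).const_mul c).const_sub 1
  have h2 : HasDerivAt (fun x : ℝ => 1 - (c + δ) * x) (-(c + δ)) 0 := by
    simpa using ((hasDerivAt_id (0:ℝ)).const_mul (c + δ)).const_sub 1
  have h1' : HasDerivAt (fun x : ℝ => (1 - c * x) ^ (1 - t)) (-(c * (1 - t))) 0 := by
    have := h1.rpow_const (p := 1 - t) (by left; norm_num)
    simpa using this
  have h2' : HasDerivAt (fun x : ℝ => (1 - (c + δ) * x) ^ t) (-((c + δ) * t)) 0 := by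
    have := h2.rpow_const (p := t) (by left; norm_num)
    have h := this
    simp at h
    convert h using 1
    ring
  have hlin : HasDerivAt (fun x : ℝ => a * x) a 0 := by
    simpa using (hasDerivAt_id (0:ℝ)).const_mul a
  have hinner : HasDerivAt
      (fun x : ℝ => a * x + (1 - c * x) ^ (1 - t) * (1 - (c + δ) * x) ^ t)
      (a - c - t * δ) 0 := by
    have := hlin.add (h1'.mul h2')
    have e : a - c - t * δ = a + (-(c * (1 - t)) * (1 - (c + δ) * 0) ^ t + (1 - c * 0) ^ (1 - t) * -((c + δ) * t)) := by
      simp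
      ring
    rw [e]; exact this
  have hinner0 : (fun x : ℝ => a * x + (1 - c * x) ^ (1 - t) * (1 - (c + δ) * x) ^ t) 0 = 1 := by
    simp
  have hFderiv : HasDerivAt F (c + t * δ - a) 0 := by
    have hne : (fun x : ℝ => a * x + (1 - c * x) ^ (1 - t) * (1 - (c + δ) * x) ^ t) 0 ≠ 0 := by
      rw [hinner0]; norm_num
    have := (hinner.log hne).neg
    norm_num at this
    have e : c + t * δ - a = t * δ - (a - c) := by ring
    rw [e]; exact this
  have hF0 : F 0 = 0 := by
    simp [hF]
  -- slope convergence
  have hslope : Tendsto (fun x => F x / x) (nhdsWithin 0 {(0:ℝ)}ᶜ) (nhds (c + t * δ - a)) := by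
    have := hasDerivAt_iff_tendsto_slope.mp hFderiv
    refine this.congr fun x => ?_
    simp [slope, hF0, div_eq_inv_mul]
  -- 1/n → 0 within {0}ᶜ
  have hinv : Tendsto (fun n : ℕ => (1 : ℝ) / n) atTop (nhdsWithin 0 {(0:ℝ)}ᶜ) := by
    refine tendsto_nhdsWithin_of_tendsto_nhds_of_eventually_within _
      tendsto_one_div_atTop_nhds_zero_nat ?_
    filter_upwards [eventually_ge_atTop 1] with n hn
    have : (0:ℝ) < n := by exact_mod_cast hn
    simp [Set.mem_compl_iff]
    positivity
  have hmain : Tendsto (fun n : ℕ => F (1 / n) / (1 / n)) atTop (nhds (c + t * δ - a)) :=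
    hslope.comp hinv
  refine hmain.congr' ?_
  filter_upwards [eventually_ge_atTop 1] with n hn
  have hn0 : (0:ℝ) < n := by exact_mod_cast hn
  have key : chernoffPhi (c / n) ((c + δ) / n) t = F (1 / n) := by
    unfold chernoffPhi
    rw [hF]
    have e1 : (c / (n:ℝ)) ^ (1 - t) * ((c + δ) / n) ^ t = a * (1 / n) := by
      rw [Real.div_rpow hc.le hn0.le, Real.div_rpow hcδ.le hn0.le]
      rw [div_mul_div_comm, ← Real.rpow_add hn0]
      simp [ha]
      ring
    have e2 : (1:ℝ) - c / n = 1 - c * (1 / n) := by ring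
    have e3 : (1:ℝ) - (c + δ) / n = 1 - (c + δ) * (1 / n) := by ring
    rw [e1, e2, e3]
  rw [key]
  rw [div_div_eq_mul_div, div_one, mul_comm]
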